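/- Let Q² = [q_{ij}] be a real symmetric positive definite d×d matrix, and define the trigonometric polynomial G(ξ₁,…,ξ_d) := 4 Σ_{i=1}^d q_{ii} sin²(ξ_i/2) + 2 Σ_{1≤i<j≤d} q_{ij} sin ξ_i sin ξ_j. Then G(ξ) ≥ 0 for all ξ ∈ ℝ^d, and G(ξ) = 0 if and only if ξ ∈ 2πℤ^d. -/

import Mathlib

open Matrix

lemma sum_split_symm {d : ℕ} (f : Fin d → Fin d → ℝ) (hf : ∀ i j, f j i = f i j) :
    ∑ i, ∑ j, f i j =
      (∑ i, f i i) + 2 * ∑ i, ∑ j, if i < j then f i j else 0 := by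
  have h1 : ∀ i j : Fin d, f i j =
      (if i < j then f i j else 0) + (if j < i then f i j else 0) +
      (if i = j then f i j else 0) := by
    intro i j
    rcases lt_trichotomy i j with h | h | h
    · simp [h, lt_asymm h, ne_of_lt h]
    · simp [h]
    · simp [h, lt_asymm h, (ne_of_lt h).symm]
  have h2 : ∑ i, ∑ j, f i j =
      (∑ i, ∑ j, if i < j then f i j else 0) +
      (∑ i, ∑ j, if j < i then f i j else 0) +
      (∑ i, ∑ j, if i = j then f i j else 0) := by
    rw [← Finset.sum_add_distrib, ← Finset.sum_add_distrib]
    refine Finset.sum_congr rfl fun i _ => ?_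
    rw [← Finset.sum_add_distrib, ← Finset.sum_add_distrib]
    exact Finset.sum_congr rfl fun j _ => h1 i j
  have h3 : (∑ i, ∑ j, if i = j then f i j else 0) = ∑ i, f i i := by
    refine Finset.sum_congr rfl fun i _ => ?_
    simp
  have h4 : (∑ i, ∑ j, if j < i then f i j else 0) =
      ∑ i, ∑ j, if i < j then f i j else 0 := by
    rw [Finset.sum_comm]
    refine Finset.sum_congr rfl fun i _ => Finset.sum_congr rfl fun j _ => ?_
    rw [hf]
  rw [h2, h3, h4]; ring

theorem trig_polynomial_nonneg_and_zeros
    (d : ℕ) (q : Matrix (Fin d) (Fin d) ℝ) (hsymm : qᵀ = q) (hpd : q.PosDef) :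
    let G : (Fin d → ℝ) → ℝ := fun ξ =>
      4 * ∑ i, q i i * Real.sin (ξ i / 2) ^ 2 +
      2 * ∑ i, ∑ j, if i < j then q i j * Real.sin (ξ i) * Real.sin (ξ j) else 0
    (∀ ξ : Fin d → ℝ, 0 ≤ G ξ) ∧
    (∀ ξ : Fin d → ℝ, G ξ = 0 ↔ ∃ k : Fin d → ℤ, ∀ i, ξ i = 2 * Real.pi * k i) := by
  intro G
  have hq : ∀ i j, q j i = q i j := fun i j => congrFun (congrFun hsymm i) j
  have hsin : ∀ x : ℝ, Real.sin x = 2 * Real.sin (x / 2) * Real.cos (x / 2) := by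
    intro x
    have h := Real.sin_two_mul (x / 2)
    rw [show 2 * (x / 2) = x by ring] at h
    exact h
  have hdiag : ∀ i, 0 < q i i := by
    intro i
    have h := (posDef_iff_dotProduct_mulVec.mp hpd).2 (x := Pi.single i 1) (by
      intro h
      have := congrFun h i
      simp at this)
    have he : dotProduct (star (Pi.single i 1)) (q *ᵥ Pi.single i 1) = q i i := by
      simp [Matrix.mulVec_single, dotProduct, Pi.single_apply]
    rwa [he] at h
  -- key identity
  have key : ∀ ξ : Fin d → ℝ, G ξ =
      (∑ i, ∑ j, q i j * Real.sin (ξ i) * Real.sin (ξ j)) +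
      4 * ∑ i, q i i * Real.sin (ξ i / 2) ^ 4 := by
    intro ξ
    have hs := sum_split_symm (fun i j => q i j * Real.sin (ξ i) * Real.sin (ξ j))
      (fun i j => by simp only [hq]; ring)
    beta_reduce at hs
    have hterm : ∀ i, q i i * Real.sin (ξ i) * Real.sin (ξ i) +
        4 * (q i i * Real.sin (ξ i / 2) ^ 4) = 4 * (q i i * Real.sin (ξ i / 2) ^ 2) := by
      intro i
      have hc : Real.sin (ξ i / 2) ^ 2 + Real.cos (ξ i / 2) ^ 2 = 1 :=
        Real.sin_sq_add_cos_sq _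
      rw [hsin (ξ i)]
      linear_combination (4 * q i i * Real.sin (ξ i / 2) ^ 2) * hc
    have hsum : ∑ i, (4 * (q i i * Real.sin (ξ i / 2) ^ 2)
          - q i i * Real.sin (ξ i) * Real.sin (ξ i))
        = ∑ i, 4 * (q i i * Real.sin (ξ i / 2) ^ 4) :=
      Finset.sum_congr rfl fun i _ => by linarith [hterm i]
    rw [Finset.sum_sub_distrib] at hsum
    rw [← Finset.mul_sum] at hsum
    rw [show (∑ i, 4 * (q i i * Real.sin (ξ i / 2) ^ 4))
        = 4 * ∑ i, q i i * Real.sin (ξ i / 2) ^ 4 from (Finset.mul_sum _ _ _).symm] at hsum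
    show 4 * (∑ i, q i i * Real.sin (ξ i / 2) ^ 2) + 2 * _ = _
    linarith [hs, hsum]
  have hquad : ∀ ξ : Fin d → ℝ,
      0 ≤ ∑ i, ∑ j, q i j * Real.sin (ξ i) * Real.sin (ξ j) := by
    intro ξ
    have h := (posSemidef_iff_dotProduct_mulVec.mp hpd.posSemidef).2 (fun i => Real.sin (ξ i))
    have he : dotProduct (star (fun i => Real.sin (ξ i))) (q *ᵥ fun i => Real.sin (ξ i))
        = ∑ i, ∑ j, q i j * Real.sin (ξ i) * Real.sin (ξ j) := by
      simp [dotProduct, Matrix.mulVec, Finset.mul_sum]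
      exact Finset.sum_congr rfl fun i _ => Finset.sum_congr rfl fun j _ => by ring
    rwa [he] at h
  have htail : ∀ ξ : Fin d → ℝ, 0 ≤ ∑ i, q i i * Real.sin (ξ i / 2) ^ 4 :=
    fun ξ => Finset.sum_nonneg fun i _ =>
      mul_nonneg (hdiag i).le (by positivity)
  constructor
  · intro ξ
    rw [key ξ]
    have := hquad ξ
    have := htail ξ
    linarith
  · intro ξ
    constructor
    · intro h0
      rw [key ξ] at h0
      have hT : ∑ i, q i i * Real.sin (ξ i / 2) ^ 4 = 0 := by
        have := hquad ξ; have := htail ξ; linarith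
      have hall : ∀ i ∈ Finset.univ, q i i * Real.sin (ξ i / 2) ^ 4 = 0 :=
        (Finset.sum_eq_zero_iff_of_nonneg fun i _ =>
          mul_nonneg (hdiag i).le (by positivity)).mp hT
      have hz : ∀ i, Real.sin (ξ i / 2) = 0 := by
        intro i
        have h := hall i (Finset.mem_univ i)
        have h4 : Real.sin (ξ i / 2) ^ 4 = 0 := by
          rcases mul_eq_zero.mp h with h' | h'
          · exact absurd h' (hdiag i).ne'
          · exact h'
        exact pow_eq_zero_iff (by norm_num) |>.mp h4
      choose k hk using fun i => Real.sin_eq_zero_iff.mp (hz i)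
      refine ⟨k, fun i => ?_⟩
      have := hk i
      linarith
    · rintro ⟨k, hk⟩
      rw [key ξ]
      have hz : ∀ i, Real.sin (ξ i / 2) = 0 := by
        intro i
        rw [hk i, show 2 * Real.pi * (k i : ℝ) / 2 = (k i : ℝ) * Real.pi by ring]
        exact Real.sin_int_mul_pi _
      have hz2 : ∀ i, Real.sin (ξ i) = 0 := by
        intro i
        rw [hsin (ξ i), hz i]; ring
      simp [hz, hz2]
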